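/- arXiv:2209.10213 — 2 statements merged into one kernel-verified Lean document; each statement's English description precedes it below -/
import Mathlib

section
/- Fix n ≥ 4, a_n, b_n, c_n, d_n ∈ [0,1] and f : 𝕋 → ℝ. Let F : Ω_n → ℝ be F(η) = ⟨π(η), f⟩ = n^{−1} ∑_{x∈ℤ_n} η(x) f(x/n). Then for every η ∈ Ω_n: 𝓛ₙ F(η) = −(a_n+b_n) n^{−2} ∑_{x∈ℤ_n} η(x) ∇_n^− f(x/n) + c_n n^{−2} ∑_{x∈ℤ_n} η(x) ∇_n^+ f(x/n) − a_n n^{−2} (η(1)−η(n)) ∇_n^− f(0) + d_n n^{−2} (η(1)−η(2)) ∇_n^+ f(1/n). -/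
noncomputable section

open Finset

/-- `η^{1→n−1}`: remove the top card and insert it at position `n−1`.
Positions are labelled by `ZMod n`, with position `n` corresponding to `0`
and position `n−1` to `-1`. -/
def mapA {n : ℕ} (η : ZMod n → Fin 2) : ZMod n → Fin 2 :=
  fun x => if x = 0 then η 0 else if x = -1 then η 1 else η (x + 1)

/-- `η^{1→n}`: remove the top card and insert it at the bottom,
i.e. `η^{1→n}(x) = η(x+1)` cyclically. -/
def mapB {n : ℕ} (η : ZMod n → Fin 2) : ZMod n → Fin 2 :=
  fun x => η (x + 1)

/-- `η^{n→1}`: remove the bottom card and insert it at the top,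
i.e. `η^{n→1}(x) = η(x−1)` cyclically. -/
def mapC {n : ℕ} (η : ZMod n → Fin 2) : ZMod n → Fin 2 :=
  fun x => η (x - 1)

/-- `η^{1↔2}`: transpose the coordinates at positions `1` and `2`. -/
def mapD {n : ℕ} (η : ZMod n → Fin 2) : ZMod n → Fin 2 :=
  fun x => if x = 1 then η 2 else if x = 2 then η 1 else η x

/-- The particle-system generator `𝓛ₙ`. -/
def gen {n : ℕ} (a b c d : ℝ) (f : (ZMod n → Fin 2) → ℝ) (η : ZMod n → Fin 2) : ℝ :=
  a * (f (mapA η) - f η) + b * (f (mapB η) - f η)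
    + c * (f (mapC η) - f η) + d * (f (mapD η) - f η)

/-- The Bernoulli product measure `ν_ρ` on `Ω_n = {0,1}^{ℤ_n}`. -/
def nuMeasure {n : ℕ} [NeZero n] (ρ : ℝ) (η : ZMod n → Fin 2) : ℝ :=
  ∏ x : ZMod n, (ρ * ((η x : ℕ) : ℝ) + (1 - ρ) * (1 - ((η x : ℕ) : ℝ)))

/-- `∫ F dν_ρ = ∑_η ν_ρ(η) F(η)`. -/
def integral {n : ℕ} [NeZero n] (ρ : ℝ) (F : (ZMod n → Fin 2) → ℝ) : ℝ :=
  ∑ η : ZMod n → Fin 2, nuMeasure ρ η * F η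


/-!
STATEMENT 7.  A function `f : 𝕋 → ℝ` on the torus `𝕋 = ℝ/ℤ` is modelled as a
1-periodic `f : ℝ → ℝ`, evaluated at `x/n` for `x ∈ ZMod n` via the canonical
representative `x.val ∈ {0,…,n−1}` (so `f(n/n) = f(0)`).
-/

/-- The discrete gradient `∇_n^− f(x/n) = n (f(x/n) − f((x−1)/n))`. -/
def gradMinus (n : ℕ) (f : ℝ → ℝ) (x : ZMod n) : ℝ :=
  n * (f ((x.val : ℝ) / n) - f (((x - 1).val : ℝ) / n))

/-- The discrete gradient `∇_n^+ f(x/n) = n (f((x+1)/n) − f(x/n))`. -/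
def gradPlus (n : ℕ) (f : ℝ → ℝ) (x : ZMod n) : ℝ :=
  n * (f (((x + 1).val : ℝ) / n) - f ((x.val : ℝ) / n))

/-- The empirical pairing `⟨π(η), f⟩ = n⁻¹ ∑_{x∈ℤ_n} η(x) f(x/n)`. -/
def pairing {n : ℕ} [NeZero n] (η : ZMod n → Fin 2) (f : ℝ → ℝ) : ℝ :=
  (1 / (n : ℝ)) * ∑ x : ZMod n, ((η x : ℕ) : ℝ) * f ((x.val : ℝ) / n)

theorem gen_on_empirical_pairing {n : ℕ} [NeZero n] (hn : 4 ≤ n)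
    (a b c d : ℝ) (ha : a ∈ Set.Icc (0 : ℝ) 1) (hb : b ∈ Set.Icc (0 : ℝ) 1)
    (hc : c ∈ Set.Icc (0 : ℝ) 1) (hd : d ∈ Set.Icc (0 : ℝ) 1)
    (f : ℝ → ℝ) (hf : Function.Periodic f 1) (η : ZMod n → Fin 2) :
    gen a b c d (fun ξ => pairing ξ f) η
      = - (a + b) * (1 / (n : ℝ) ^ 2) * (∑ x : ZMod n, ((η x : ℕ) : ℝ) * gradMinus n f x)
        + c * (1 / (n : ℝ) ^ 2) * (∑ x : ZMod n, ((η x : ℕ) : ℝ) * gradPlus n f x)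
        - a * (1 / (n : ℝ) ^ 2) * (((η 1 : ℕ) : ℝ) - ((η 0 : ℕ) : ℝ)) * gradMinus n f 0
        + d * (1 / (n : ℝ) ^ 2) * (((η 1 : ℕ) : ℝ) - ((η 2 : ℕ) : ℝ)) * gradPlus n f 1 := by
  have hn0 : (n : ℝ) ≠ 0 := Nat.cast_ne_zero.2 (NeZero.ne n)
  haveI : Fact (1 < n) := ⟨by omega⟩
  have h01 : (0 : ZMod n) ≠ -1 := by
    intro h
    have h1 : (1 : ZMod n) = 0 := by
      have := congrArg Neg.neg h
      simpa using this.symm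
    exact one_ne_zero h1
  have h12 : (1 : ZMod n) ≠ 2 := by
    intro h
    have h2 : ((2 : ℕ) : ZMod n) = (2 : ZMod n) := by push_cast; ring
    have hv := congrArg ZMod.val h
    rw [ZMod.val_one, ← h2, ZMod.val_natCast_of_lt (by omega)] at hv
    omega
  -- shifted sums
  have hB : (∑ x : ZMod n, ((mapB η x : ℕ) : ℝ) * f ((x.val : ℝ) / n))
      = ∑ x : ZMod n, ((η x : ℕ) : ℝ) * f (((x - 1).val : ℝ) / n) := by
    refine (Fintype.sum_equiv (Equiv.addRight (1 : ZMod n)) _ _ fun x => ?_).symm.symm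
    simp [mapB, Equiv.addRight]
  have hC : (∑ x : ZMod n, ((mapC η x : ℕ) : ℝ) * f ((x.val : ℝ) / n))
      = ∑ x : ZMod n, ((η x : ℕ) : ℝ) * f (((x + 1).val : ℝ) / n) := by
    refine Fintype.sum_equiv (Equiv.subRight (1 : ZMod n)) _ _ fun x => ?_
    simp [mapC, Equiv.subRight]
  -- mapA correction
  have hA : (∑ x : ZMod n, ((mapA η x : ℕ) : ℝ) * f ((x.val : ℝ) / n))
      = (∑ x : ZMod n, ((mapB η x : ℕ) : ℝ) * f ((x.val : ℝ) / n))
        + ((((η 0 : ℕ) : ℝ) - ((η 1 : ℕ) : ℝ)) * f (((0 : ZMod n).val : ℝ) / n)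
           + (((η 1 : ℕ) : ℝ) - ((η 0 : ℕ) : ℝ)) * f ((((-1) : ZMod n).val : ℝ) / n)) := by
    have hdiff : (∑ x : ZMod n, (((mapA η x : ℕ) : ℝ) * f ((x.val : ℝ) / n)
          - ((mapB η x : ℕ) : ℝ) * f ((x.val : ℝ) / n)))
        = ((((η 0 : ℕ) : ℝ) - ((η 1 : ℕ) : ℝ)) * f (((0 : ZMod n).val : ℝ) / n)
           + (((η 1 : ℕ) : ℝ) - ((η 0 : ℕ) : ℝ)) * f ((((-1) : ZMod n).val : ℝ) / n)) := by
      rw [← Finset.sum_subset (Finset.subset_univ ({0, -1} : Finset (ZMod n)))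
          (fun x _ hx => ?_)]
      · rw [Finset.sum_pair h01]
        simp only [mapA, mapB, if_pos rfl, if_neg h01, if_neg h01.symm, if_pos rfl, if_true]
        have h10 : (-1 : ZMod n) + 1 = 0 := by ring
        rw [h10]
        ring
      · simp only [Finset.mem_insert, Finset.mem_singleton, not_or] at hx
        simp [mapA, mapB, hx.1, hx.2]
    have := Finset.sum_sub_distrib (s := (Finset.univ : Finset (ZMod n)))
      (f := fun x => ((mapA η x : ℕ) : ℝ) * f ((x.val : ℝ) / n))
      (g := fun x => ((mapB η x : ℕ) : ℝ) * f ((x.val : ℝ) / n))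
    rw [this] at hdiff
    linarith [hdiff]
  -- mapD correction
  have hD : (∑ x : ZMod n, ((mapD η x : ℕ) : ℝ) * f ((x.val : ℝ) / n))
      = (∑ x : ZMod n, ((η x : ℕ) : ℝ) * f ((x.val : ℝ) / n))
        + ((((η 2 : ℕ) : ℝ) - ((η 1 : ℕ) : ℝ)) * f (((1 : ZMod n).val : ℝ) / n)
           + (((η 1 : ℕ) : ℝ) - ((η 2 : ℕ) : ℝ)) * f (((2 : ZMod n).val : ℝ) / n)) := by
    have hdiff : (∑ x : ZMod n, (((mapD η x : ℕ) : ℝ) * f ((x.val : ℝ) / n)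
          - ((η x : ℕ) : ℝ) * f ((x.val : ℝ) / n)))
        = ((((η 2 : ℕ) : ℝ) - ((η 1 : ℕ) : ℝ)) * f (((1 : ZMod n).val : ℝ) / n)
           + (((η 1 : ℕ) : ℝ) - ((η 2 : ℕ) : ℝ)) * f (((2 : ZMod n).val : ℝ) / n)) := by
      rw [← Finset.sum_subset (Finset.subset_univ ({1, 2} : Finset (ZMod n)))
          (fun x _ hx => ?_)]
      · rw [Finset.sum_pair h12]
        simp only [mapD, if_pos rfl, if_neg h12, if_neg h12.symm, if_pos rfl, if_true]
        ring
      · simp only [Finset.mem_insert, Finset.mem_singleton, not_or] at hx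
        simp [mapD, hx.1, hx.2]
    have := Finset.sum_sub_distrib (s := (Finset.univ : Finset (ZMod n)))
      (f := fun x => ((mapD η x : ℕ) : ℝ) * f ((x.val : ℝ) / n))
      (g := fun x => ((η x : ℕ) : ℝ) * f ((x.val : ℝ) / n))
    rw [this] at hdiff
    linarith [hdiff]
  -- gradient sums
  have hGM : (∑ x : ZMod n, ((η x : ℕ) : ℝ) * gradMinus n f x)
      = (n : ℝ) * ((∑ x : ZMod n, ((η x : ℕ) : ℝ) * f ((x.val : ℝ) / n))
          - ∑ x : ZMod n, ((η x : ℕ) : ℝ) * f (((x - 1).val : ℝ) / n)) := by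
    rw [mul_sub, Finset.mul_sum, Finset.mul_sum, ← Finset.sum_sub_distrib]
    exact Finset.sum_congr rfl fun x _ => by simp only [gradMinus]; ring
  have hGP : (∑ x : ZMod n, ((η x : ℕ) : ℝ) * gradPlus n f x)
      = (n : ℝ) * ((∑ x : ZMod n, ((η x : ℕ) : ℝ) * f (((x + 1).val : ℝ) / n))
          - ∑ x : ZMod n, ((η x : ℕ) : ℝ) * f ((x.val : ℝ) / n)) := by
    rw [mul_sub, Finset.mul_sum, Finset.mul_sum, ← Finset.sum_sub_distrib]
    exact Finset.sum_congr rfl fun x _ => by simp only [gradPlus]; ring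
  have hg0 : gradMinus n f 0
      = (n : ℝ) * (f (((0 : ZMod n).val : ℝ) / n) - f ((((-1) : ZMod n).val : ℝ) / n)) := by
    simp only [gradMinus, zero_sub]
  have hg1 : gradPlus n f 1
      = (n : ℝ) * (f (((2 : ZMod n).val : ℝ) / n) - f (((1 : ZMod n).val : ℝ) / n)) := by
    simp only [gradPlus, one_add_one_eq_two]
  simp only [gen, pairing]
  rw [hA, hB, hC, hD, hGM, hGP, hg0, hg1]
  field_simp
  ring
end
end

section
/- Fix n ≥ 4 and ρ ∈ [0,1]. Let f : Ω_n → [0,∞) be a probability density with respect to ν_ρ, i.e. ∫ f dν_ρ = 1. Then for every B > 0: ∫ (η(1) − η(n)) f(η) dν_ρ(η) ≤ 2B + (1/(2B)) ∫ (√(f(η^{1→n})) − √(f(η)))² dν_ρ(η). -/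
noncomputable section

open Finset

/-!
STATEMENT 11.  Young-type bound: if `f ≥ 0` is a probability density w.r.t.
`ν_ρ`, then for every `B > 0`,
`∫ (η(1) − η(n)) f dν_ρ ≤ 2B + (1/(2B)) ∫ (√(f∘(·)^{1→n}) − √f)² dν_ρ`.
Position `n` is `0` in `ZMod n`.
-/

lemma nu_nonneg {n : ℕ} [NeZero n] {ρ : ℝ} (hρ : ρ ∈ Set.Icc (0 : ℝ) 1)
    (η : ZMod n → Fin 2) : 0 ≤ nuMeasure ρ η := by
  apply Finset.prod_nonneg
  intro x _
  have h1 : ((η x : ℕ) : ℝ) ≤ 1 := by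
    have := (η x).is_lt
    exact_mod_cast Nat.lt_succ_iff.mp this
  have h0 : (0:ℝ) ≤ ((η x : ℕ) : ℝ) := by positivity
  obtain ⟨ha, hb⟩ := hρ
  nlinarith

lemma nu_mapB {n : ℕ} [NeZero n] (ρ : ℝ) (η : ZMod n → Fin 2) :
    nuMeasure ρ (mapB η) = nuMeasure ρ η := by
  unfold nuMeasure mapB
  exact Fintype.prod_equiv (Equiv.addRight (1 : ZMod n)) _ _ (fun x => rfl)

def shiftEquiv {n : ℕ} : (ZMod n → Fin 2) ≃ (ZMod n → Fin 2) where
  toFun := mapB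
  invFun := mapC
  left_inv η := by funext x; simp [mapB, mapC]
  right_inv η := by funext x; simp [mapB, mapC]

lemma integral_mapB {n : ℕ} [NeZero n] (ρ : ℝ) (F : (ZMod n → Fin 2) → ℝ) :
    integral ρ (fun η => F (mapB η)) = integral ρ F := by
  unfold integral
  rw [← Equiv.sum_comp (shiftEquiv (n := n)) (fun η => nuMeasure ρ η * F η)]
  refine Finset.sum_congr rfl fun η _ => ?_
  simp [shiftEquiv, nu_mapB]

lemma mapB_zero {n : ℕ} (η : ZMod n → Fin 2) : mapB η 0 = η 1 := by
  simp [mapB]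

lemma pointwise_young {B x g gB : ℝ} (hB : 0 < B) (hx0 : 0 ≤ x) (hx1 : x ≤ 1)
    (hg : 0 ≤ g) (hgB : 0 ≤ gB) :
    x * (g - gB) ≤ (B/2) * (Real.sqrt g + Real.sqrt gB)^2
      + (1/(2*B)) * (Real.sqrt gB - Real.sqrt g)^2 := by
  have hsg : Real.sqrt g ^ 2 = g := Real.sq_sqrt hg
  have hsgB : Real.sqrt gB ^ 2 = gB := Real.sq_sqrt hgB
  rcases le_or_gt g gB with h | h
  · have h1 : x * (g - gB) ≤ 0 := mul_nonpos_of_nonneg_of_nonpos hx0 (by linarith)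
    refine h1.trans ?_
    positivity
  · have h1 : x * (g - gB) ≤ g - gB := by nlinarith
    refine h1.trans ?_
    have key2 : 2*B*(g - gB) ≤ B^2*(Real.sqrt g + Real.sqrt gB)^2
        + (Real.sqrt gB - Real.sqrt g)^2 := by
      nlinarith [sq_nonneg (B * (Real.sqrt g + Real.sqrt gB) - (Real.sqrt g - Real.sqrt gB))]
    have h2 : g - gB ≤ (B^2*(Real.sqrt g + Real.sqrt gB)^2
        + (Real.sqrt gB - Real.sqrt g)^2) / (2*B) := by
      rw [le_div_iff₀ (by positivity)]
      linarith
    refine h2.trans_eq ?_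
    field_simp

theorem young_bound_top_bottom {n : ℕ} [NeZero n] (hn : 4 ≤ n)
    (ρ : ℝ) (hρ : ρ ∈ Set.Icc (0 : ℝ) 1)
    (f : (ZMod n → Fin 2) → ℝ) (hf0 : ∀ η, 0 ≤ f η)
    (hf1 : integral ρ f = 1) (B : ℝ) (hB : 0 < B) :
    integral ρ (fun η => (((η 1 : ℕ) : ℝ) - ((η 0 : ℕ) : ℝ)) * f η)
      ≤ 2 * B + (1 / (2 * B))
          * integral ρ (fun η => (Real.sqrt (f (mapB η)) - Real.sqrt (f η)) ^ 2) := by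
  classical
  have hν : ∀ η : ZMod n → Fin 2, 0 ≤ nuMeasure ρ η := fun η => nu_nonneg hρ η
  have hx01 : ∀ η : ZMod n → Fin 2, (0:ℝ) ≤ ((η 1 : ℕ) : ℝ) ∧ ((η 1 : ℕ) : ℝ) ≤ 1 := by
    intro η
    constructor
    · positivity
    · have := (η 1).is_lt
      exact_mod_cast Nat.lt_succ_iff.mp this
  -- Step 1: rewrite using shift invariance
  have key : integral ρ (fun η => (((η 1 : ℕ) : ℝ) - ((η 0 : ℕ) : ℝ)) * f η)
      = integral ρ (fun η => ((η 1 : ℕ) : ℝ) * (f η - f (mapB η))) := by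
    have h' : ∑ η : ZMod n → Fin 2, nuMeasure ρ η * (((η 1 : ℕ) : ℝ) * f (mapB η))
        = ∑ η : ZMod n → Fin 2, nuMeasure ρ η * (((η 0 : ℕ) : ℝ) * f η) := by
      have h := integral_mapB ρ (fun η => ((η 0 : ℕ) : ℝ) * f η)
      simpa [integral, mapB_zero] using h
    have expand : ∀ η : ZMod n → Fin 2,
        nuMeasure ρ η * ((((η 1 : ℕ) : ℝ) - ((η 0 : ℕ) : ℝ)) * f η)
        = nuMeasure ρ η * (((η 1 : ℕ) : ℝ) * (f η - f (mapB η)))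
          + (nuMeasure ρ η * (((η 1 : ℕ) : ℝ) * f (mapB η))
            - nuMeasure ρ η * (((η 0 : ℕ) : ℝ) * f η)) := fun η => by ring
    simp only [integral, expand, Finset.sum_add_distrib, Finset.sum_sub_distrib]
    rw [h']
    ring
  rw [key]
  -- Step 2: pointwise Young bound
  have hbound : integral ρ (fun η => ((η 1 : ℕ) : ℝ) * (f η - f (mapB η)))
      ≤ (B/2) * integral ρ (fun η => (Real.sqrt (f η) + Real.sqrt (f (mapB η)))^2)
        + (1/(2*B)) * integral ρ (fun η => (Real.sqrt (f (mapB η)) - Real.sqrt (f η))^2) := by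
    simp only [integral, Finset.mul_sum]
    rw [← Finset.sum_add_distrib]
    apply Finset.sum_le_sum
    intro η _
    have hpw := pointwise_young (B := B) (x := ((η 1 : ℕ) : ℝ)) (g := f η)
      (gB := f (mapB η)) hB (hx01 η).1 (hx01 η).2 (hf0 η) (hf0 (mapB η))
    calc nuMeasure ρ η * (((η 1 : ℕ) : ℝ) * (f η - f (mapB η)))
        ≤ nuMeasure ρ η * ((B/2) * (Real.sqrt (f η) + Real.sqrt (f (mapB η)))^2
            + (1/(2*B)) * (Real.sqrt (f (mapB η)) - Real.sqrt (f η))^2) :=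
          mul_le_mul_of_nonneg_left hpw (hν η)
      _ = B/2 * (nuMeasure ρ η * (Real.sqrt (f η) + Real.sqrt (f (mapB η)))^2)
            + 1/(2*B) * (nuMeasure ρ η * (Real.sqrt (f (mapB η)) - Real.sqrt (f η))^2) := by
          ring
  refine hbound.trans ?_
  -- Step 3: the first integral is at most 4
  have hint4 : integral ρ (fun η => (Real.sqrt (f η) + Real.sqrt (f (mapB η)))^2) ≤ 4 := by
    have h2 : integral ρ (fun η => (Real.sqrt (f η) + Real.sqrt (f (mapB η)))^2)
        ≤ integral ρ (fun η => 2 * f η + 2 * f (mapB η)) := by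
      simp only [integral]
      apply Finset.sum_le_sum
      intro η _
      apply mul_le_mul_of_nonneg_left _ (hν η)
      nlinarith [Real.sq_sqrt (hf0 η), Real.sq_sqrt (hf0 (mapB η)),
        sq_nonneg (Real.sqrt (f η) - Real.sqrt (f (mapB η)))]
    have h3 : integral ρ (fun η => 2 * f η + 2 * f (mapB η)) = 4 := by
      have hc : integral ρ (fun η => f (mapB η)) = 1 := (integral_mapB ρ f).trans hf1
      have expand : ∀ η : ZMod n → Fin 2,
          nuMeasure ρ η * (2 * f η + 2 * f (mapB η))
          = 2 * (nuMeasure ρ η * f η) + 2 * (nuMeasure ρ η * f (mapB η)) := fun η => by ring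
      simp only [integral, expand, Finset.sum_add_distrib, ← Finset.mul_sum]
      simp only [integral] at hf1 hc
      rw [hf1, hc]
      norm_num
    linarith
  have hI2 : 0 ≤ integral ρ (fun η => (Real.sqrt (f (mapB η)) - Real.sqrt (f η))^2) := by
    apply Finset.sum_nonneg
    intro η _
    exact mul_nonneg (hν η) (sq_nonneg _)
  have h4 : B/2 * integral ρ (fun η => (Real.sqrt (f η) + Real.sqrt (f (mapB η)))^2)
      ≤ 2 * B := by nlinarith
  linarith
end
end
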